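/- arXiv:2202.11526 — 3 statements merged into one kernel-verified Lean document; each statement's English description precedes it below -/
import Mathlib

section
/- Let g : [0,∞) → [0,∞) be continuous and strictly increasing, let μ be Lebesgue measure on ℝ, let a ≥ 0, and let p be the Sugeno integral of g over [0,a] with respect to μ. Then g(a - p) ≥ p. Moreover, if 0 < p < a, then g(a - p) = p. -/
open MeasureTheory Set

/-- Sugeno integral of `f` over `A` w.r.t. measure `μ`:
`⨆_{α ≥ 0} min α (μ (A ∩ {x | f x ≥ α}))` (values taken in ℝ). -/
noncomputable def sugeno (μ : Measure ℝ) (A : Set ℝ) (f : ℝ → ℝ) : ℝ :=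
  ⨆ α : {a : ℝ // 0 ≤ a}, min α.1 (μ (A ∩ {x | α.1 ≤ f x})).toReal

theorem diaz_metcalf_stmt0 (g : ℝ → ℝ) (a : ℝ) (ha : 0 ≤ a)
    (hg_cont : ContinuousOn g (Set.Ici 0))
    (hg_mono : StrictMonoOn g (Set.Ici 0))
    (hg_nonneg : ∀ x ∈ Set.Ici (0 : ℝ), 0 ≤ g x)
    (p : ℝ) (hp : p = sugeno volume (Set.Icc 0 a) g) :
    p ≤ g (a - p) ∧ (0 < p → p < a → g (a - p) = p) := by
  have hps : p = ⨆ α : {a : ℝ // 0 ≤ a},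
      min α.1 (volume (Icc 0 a ∩ {x | α.1 ≤ g x})).toReal := hp
  have hFle : ∀ α : ℝ, min α (volume (Icc 0 a ∩ {x | α ≤ g x})).toReal ≤ a := by
    intro α
    have hsub : Icc (0:ℝ) a ∩ {x | α ≤ g x} ⊆ Icc 0 a := inter_subset_left
    have h2 : volume (Icc (0:ℝ) a) = ENNReal.ofReal a := by
      rw [Real.volume_Icc, sub_zero]
    have h1 : (volume (Icc 0 a ∩ {x | α ≤ g x})).toReal ≤ a := by
      calc (volume (Icc 0 a ∩ {x | α ≤ g x})).toReal
          ≤ (volume (Icc (0:ℝ) a)).toReal :=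
            ENNReal.toReal_mono (by simp [h2]) (measure_mono hsub)
        _ = a := by rw [h2, ENNReal.toReal_ofReal ha]
    exact le_trans (min_le_right _ _) h1
  have hbdd : BddAbove (Set.range fun α : {a : ℝ // 0 ≤ a} =>
      min α.1 (volume (Icc 0 a ∩ {x | α.1 ≤ g x})).toReal) := by
    refine ⟨a, ?_⟩
    rintro _ ⟨α, rfl⟩
    exact hFle α.1
  have hpF : ∀ α : ℝ, 0 ≤ α →
      min α (volume (Icc 0 a ∩ {x | α ≤ g x})).toReal ≤ p := by
    intro α hα
    rw [hps]
    exact le_ciSup hbdd ⟨α, hα⟩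
  have hsup : ∀ b : ℝ, (∀ α : ℝ, 0 ≤ α →
      min α (volume (Icc 0 a ∩ {x | α ≤ g x})).toReal ≤ b) → p ≤ b := by
    intro b hb
    rw [hps]
    exact ciSup_le fun α => hb α.1 α.2
  have hpa : p ≤ a := hsup a fun α _ => hFle α
  have hp0 : 0 ≤ p :=
    le_trans (le_min le_rfl ENNReal.toReal_nonneg) (hpF 0 le_rfl)
  have key : p ≤ g (a - p) := by
    by_contra h
    push_neg at h
    set t := a - p with ht
    have ht0 : 0 ≤ t := by simp [ht]; linarith
    have hgt0 : 0 ≤ g t := hg_nonneg t ht0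
    have hpos : 0 < p := lt_of_le_of_lt hgt0 h
    obtain ⟨δ, hδ0, hδ⟩ := Metric.continuousOn_iff.mp hg_cont t ht0 ((p - g t)/2) (by linarith)
    set δ' := min (δ/2) p with hδ'
    have hδ'0 : 0 < δ' := lt_min (by linarith) hpos
    have hδ'p : δ' ≤ p := min_le_right _ _
    have hδ'δ : δ' < δ := lt_of_le_of_lt (min_le_left _ _) (by linarith)
    have hb : ∀ α : ℝ, 0 ≤ α →
        min α (volume (Icc 0 a ∩ {x | α ≤ g x})).toReal ≤ max ((g t + p)/2) (p - δ') := by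
      intro α hα
      rcases le_or_gt α ((g t + p)/2) with h1 | h1
      · exact le_trans (min_le_left _ _) (le_trans h1 (le_max_left _ _))
      · refine le_trans (min_le_right _ _) (le_trans ?_ (le_max_right _ _))
        have hsub : Icc 0 a ∩ {x | α ≤ g x} ⊆ Icc (t + δ') a := by
          rintro x ⟨⟨hx0, hxa⟩, hgx⟩
          simp only [mem_setOf_eq] at hgx
          refine ⟨?_, hxa⟩
          by_contra hc
          push_neg at hc
          rcases le_or_gt x t with h2 | h2
          · have hmx : g x ≤ g t := hg_mono.monotoneOn hx0 ht0 h2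
            linarith
          · have hdist : dist x t < δ := by
              rw [Real.dist_eq, abs_of_pos (by linarith)]
              linarith
            have h3 := hδ x hx0 hdist
            rw [Real.dist_eq] at h3
            have h4 := (abs_lt.mp h3).2
            linarith
        have h3 : volume (Icc (t + δ') a) = ENNReal.ofReal (a - (t + δ')) := Real.volume_Icc
        have h4 : a - (t + δ') = p - δ' := by rw [ht]; ring
        calc (volume (Icc 0 a ∩ {x | α ≤ g x})).toReal
            ≤ (volume (Icc (t + δ') a)).toReal :=
              ENNReal.toReal_mono (by simp [h3]) (measure_mono hsub)
          _ = p - δ' := by rw [h3, h4, ENNReal.toReal_ofReal (by linarith)]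
    have hle := hsup _ hb
    have hmax : max ((g t + p)/2) (p - δ') < p := max_lt (by linarith) (by linarith)
    linarith
  refine ⟨key, fun hppos hpla => le_antisymm ?_ key⟩
  by_contra h
  push_neg at h
  set t := a - p with ht
  have ht0 : 0 < t := by simp [ht]; linarith
  obtain ⟨δ, hδ0, hδ⟩ := Metric.continuousOn_iff.mp hg_cont t (le_of_lt ht0)
    (g t - p) (by linarith)
  set x := t - min t δ / 2 with hx
  have hmt : 0 < min t δ := lt_min ht0 hδ0
  have hmtt : min t δ ≤ t := min_le_left _ _
  have hx0 : (0:ℝ) ≤ x := by rw [hx]; linarith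
  have hxt : x < t := by rw [hx]; linarith
  have hdist : dist x t < δ := by
    rw [Real.dist_eq, abs_of_neg (by linarith)]
    have : min t δ ≤ δ := min_le_right _ _
    rw [hx]; linarith
  have hgx : p < g x := by
    have h3 := hδ x hx0 hdist
    rw [Real.dist_eq] at h3
    have h4 := (abs_lt.mp h3).1
    linarith
  have hsub : Icc x a ⊆ Icc 0 a ∩ {y | g x ≤ g y} := by
    rintro y ⟨hy1, hy2⟩
    exact ⟨⟨le_trans hx0 hy1, hy2⟩, hg_mono.monotoneOn hx0 (le_trans hx0 hy1) hy1⟩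
  have hfin : volume (Icc 0 a ∩ {y | g x ≤ g y}) ≠ ⊤ := by
    have h2 : volume (Icc (0:ℝ) a) = ENNReal.ofReal a := by
      rw [Real.volume_Icc, sub_zero]
    exact ne_top_of_le_ne_top (by simp [h2]) (measure_mono inter_subset_left)
  have hvol : a - x ≤ (volume (Icc 0 a ∩ {y | g x ≤ g y})).toReal := by
    have h3 : volume (Icc x a) = ENNReal.ofReal (a - x) := Real.volume_Icc
    calc a - x = (volume (Icc x a)).toReal := by
          rw [h3, ENNReal.toReal_ofReal (by linarith)]
      _ ≤ _ := ENNReal.toReal_mono hfin (measure_mono hsub)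
  have hF : p < min (g x) (volume (Icc 0 a ∩ {y | g x ≤ g y})).toReal := by
    refine lt_min hgx (lt_of_lt_of_le ?_ hvol)
    rw [hx]; linarith
  have := hpF (g x) (hg_nonneg x hx0)
  linarith
end

section
/- Let g : [0,∞) → [0,∞) be continuous and strictly decreasing, let μ be Lebesgue measure on ℝ, let a ≥ 0, and let p be the Sugeno integral of g over [0,a] with respect to μ. Then g(p) ≥ p. Moreover, if 0 < p < a, then g(p) = p. -/
open MeasureTheory Set

theorem diaz_metcalf_stmt1 (g : ℝ → ℝ) (a : ℝ) (ha : 0 ≤ a)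
    (hg_cont : ContinuousOn g (Set.Ici 0))
    (hg_anti : StrictAntiOn g (Set.Ici 0))
    (hg_nonneg : ∀ x ∈ Set.Ici (0 : ℝ), 0 ≤ g x)
    (p : ℝ) (hp : p = sugeno volume (Set.Icc 0 a) g) :
    p ≤ g p ∧ (0 < p → p < a → g p = p) := by
  simp only [sugeno] at hp
  have hIccfin : volume (Icc (0:ℝ) a) ≠ ⊤ := by
    simp [Real.volume_Icc]
  have hSfin : ∀ α : ℝ, volume (Icc 0 a ∩ {x | α ≤ g x}) ≠ ⊤ := fun α =>
    ne_top_of_le_ne_top hIccfin (measure_mono inter_subset_left)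
  have hbdd : BddAbove (Set.range fun α : {a : ℝ // 0 ≤ a} =>
      min α.1 (volume (Icc 0 a ∩ {x | α.1 ≤ g x})).toReal) := by
    refine ⟨a, ?_⟩
    rintro _ ⟨α, rfl⟩
    refine (min_le_right _ _).trans ?_
    calc (volume (Icc 0 a ∩ {x | α.1 ≤ g x})).toReal
        ≤ (volume (Icc 0 a)).toReal :=
          ENNReal.toReal_mono hIccfin (measure_mono inter_subset_left)
      _ = a := by simp [Real.volume_Icc, ENNReal.toReal_ofReal ha]
  have hterm_le : ∀ α : {a : ℝ // 0 ≤ a},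
      min α.1 (volume (Icc 0 a ∩ {x | α.1 ≤ g x})).toReal ≤ p := by
    intro α; rw [hp]; exact le_ciSup hbdd α
  have hp0 : 0 ≤ p :=
    le_trans (le_min le_rfl ENNReal.toReal_nonneg) (hterm_le ⟨0, le_rfl⟩)
  have hgp0 : 0 ≤ g p := hg_nonneg p hp0
  -- Claim 1 : p ≤ g p
  have claim1 : p ≤ g p := by
    by_contra h
    push_neg at h  -- h : g p < p
    have hppos : 0 < p := lt_of_le_of_lt hgp0 h
    set c : ℝ := (p - g p) / 2 with hc
    have hcpos : 0 < c := by rw [hc]; linarith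
    have hgp : g p = p - 2 * c := by rw [hc]; ring
    obtain ⟨δ₀, hδ₀pos, hδ₀⟩ :=
      Metric.continuousWithinAt_iff.mp (hg_cont p hp0) c hcpos
    set δ : ℝ := min δ₀ (min c p) / 2 with hδ
    have hδpos : 0 < δ := by positivity
    have hδδ₀ : δ < δ₀ := by
      have h1 : min δ₀ (min c p) ≤ δ₀ := min_le_left _ _
      rw [hδ]; linarith
    have hδc : δ ≤ c / 2 := by
      have : min δ₀ (min c p) ≤ c := (min_le_right _ _).trans (min_le_left _ _)
      rw [hδ]; linarith
    have hδp : δ ≤ p / 2 := by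
      have : min δ₀ (min c p) ≤ p := (min_le_right _ _).trans (min_le_right _ _)
      rw [hδ]; linarith
    obtain ⟨α, hα⟩ : ∃ α : {a : ℝ // 0 ≤ a},
        p - δ < min α.1 (volume (Icc 0 a ∩ {x | α.1 ≤ g x})).toReal := by
      apply exists_lt_of_lt_ciSup
      rw [← hp]
      linarith [hδpos]
    have hα1 : p - δ < α.1 := lt_of_lt_of_le hα (min_le_left _ _)
    have hα2 : p - δ < (volume (Icc 0 a ∩ {x | α.1 ≤ g x})).toReal :=
      lt_of_lt_of_le hα (min_le_right _ _)
    have hsub : Icc 0 a ∩ {x | α.1 ≤ g x} ⊆ Icc 0 (p - δ) := by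
      rintro x ⟨⟨hx0, hxa⟩, hgx⟩
      refine ⟨hx0, ?_⟩
      by_contra hx
      push_neg at hx  -- p - δ < x
      rcases le_or_gt x p with hxp | hxp
      · have hdist : dist x p < δ₀ := by
          rw [Real.dist_eq, abs_of_nonpos (by linarith)]
          linarith
        have := hδ₀ hx0 hdist
        rw [Real.dist_eq] at this
        have : g x < g p + c := by
          obtain ⟨h1, h2⟩ := abs_lt.mp this; linarith
        have : g x < p - c := by rw [hgp] at this; linarith
        have : α.1 ≤ g x := hgx
        linarith
      · have : g x < g p := hg_anti hp0 hx0 hxp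
        have : α.1 ≤ g x := hgx
        rw [hgp] at *
        linarith
    have : (volume (Icc 0 a ∩ {x | α.1 ≤ g x})).toReal ≤ p - δ := by
      calc (volume (Icc 0 a ∩ {x | α.1 ≤ g x})).toReal
          ≤ (volume (Icc 0 (p - δ))).toReal :=
            ENNReal.toReal_mono (by simp [Real.volume_Icc]) (measure_mono hsub)
        _ = p - δ := by
            rw [Real.volume_Icc, sub_zero, ENNReal.toReal_ofReal (by linarith)]
    linarith
  refine ⟨claim1, fun hppos hpa => ?_⟩
  -- Claim 2 : g p ≤ p under 0 < p < a
  by_contra hne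
  have h : p < g p := lt_of_le_of_ne claim1 (Ne.symm hne)
  set c : ℝ := (g p - p) / 2 with hc
  have hcpos : 0 < c := by rw [hc]; linarith
  obtain ⟨δ₀, hδ₀pos, hδ₀⟩ :=
    Metric.continuousWithinAt_iff.mp (hg_cont p (le_of_lt hppos)) c hcpos
  set η : ℝ := min δ₀ (min c (a - p)) / 2 with hη
  have hηpos : 0 < η := by
    have h1 : 0 < a - p := by linarith
    have h2 : 0 < min δ₀ (min c (a - p)) := lt_min hδ₀pos (lt_min hcpos h1)
    rw [hη]; linarith
  have hηδ₀ : η < δ₀ := by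
    have : min δ₀ (min c (a - p)) ≤ δ₀ := min_le_left _ _
    rw [hη]; linarith
  have hηc : η < c := by
    have : min δ₀ (min c (a - p)) ≤ c := (min_le_right _ _).trans (min_le_left _ _)
    rw [hη]; linarith
  have hηa : η < a - p := by
    have h1 : 0 < a - p := by linarith
    have : min δ₀ (min c (a - p)) ≤ a - p := (min_le_right _ _).trans (min_le_right _ _)
    rw [hη]; linarith
  set t : ℝ := p + η with ht
  have ht0 : (0:ℝ) ≤ t := by linarith
  have hta : t ≤ a := by linarith
  have hgt : t < g t := by
    have hdist : dist t p < δ₀ := by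
      rw [Real.dist_eq, ht, add_sub_cancel_left, abs_of_pos hηpos]; exact hηδ₀
    have := hδ₀ ht0 hdist
    rw [Real.dist_eq] at this
    have h1 : g p - c < g t := by
      obtain ⟨h1, h2⟩ := abs_lt.mp this; linarith
    have : g p - c = p + c := by rw [hc]; ring
    linarith
  have hsub : Icc 0 t ⊆ Icc 0 a ∩ {x | t ≤ g x} := by
    rintro x ⟨hx0, hxt⟩
    refine ⟨⟨hx0, le_trans hxt hta⟩, ?_⟩
    have : g t ≤ g x := by
      rcases eq_or_lt_of_le hxt with rfl | hlt
      · exact le_rfl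
      · exact le_of_lt (hg_anti hx0 ht0 hlt)
    exact le_trans (le_of_lt hgt) this
  have hF : t ≤ (volume (Icc 0 a ∩ {x | t ≤ g x})).toReal := by
    have h1 : (volume (Icc 0 t)).toReal ≤ (volume (Icc 0 a ∩ {x | t ≤ g x})).toReal :=
      ENNReal.toReal_mono (hSfin t) (measure_mono hsub)
    rwa [Real.volume_Icc, sub_zero, ENNReal.toReal_ofReal ht0] at h1
  have := hterm_le ⟨t, ht0⟩
  simp only [min_def] at this
  have hterm : t ≤ min t (volume (Icc 0 a ∩ {x | t ≤ g x})).toReal := le_min le_rfl hF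
  have := hterm_le ⟨t, ht0⟩
  linarith [le_trans hterm this]
end

section
/- Let f, g : [0,1] → [0,∞) be continuous functions that are both strictly increasing, let s > 1, and let μ be Lebesgue measure on ℝ. Then (Sugeno ∫₀¹ f^s dμ) · (Sugeno ∫₀¹ g^s dμ) ≤ Sugeno ∫₀¹ (f·g)^s dμ. -/
open MeasureTheory Set

lemma sugeno_meas_le_one (h : ℝ → ℝ) (α : ℝ) :
    (volume (Icc (0:ℝ) 1 ∩ {x | α ≤ h x})).toReal ≤ 1 := by
  have h1 : volume (Icc (0:ℝ) 1 ∩ {x | α ≤ h x}) ≤ volume (Icc (0:ℝ) 1) :=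
    measure_mono inter_subset_left
  calc (volume (Icc (0:ℝ) 1 ∩ {x | α ≤ h x})).toReal
      ≤ (volume (Icc (0:ℝ) 1)).toReal :=
        ENNReal.toReal_mono (by simp [Real.volume_Icc]) h1
    _ = 1 := by simp [Real.volume_Icc]

lemma sugeno_bddAbove (h : ℝ → ℝ) :
    BddAbove (Set.range fun α : {a : ℝ // 0 ≤ a} =>
      min α.1 (volume (Icc (0:ℝ) 1 ∩ {x | α.1 ≤ h x})).toReal) := by
  refine ⟨1, ?_⟩
  rintro y ⟨α, rfl⟩
  exact le_trans (min_le_right _ _) (sugeno_meas_le_one h α.1)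

lemma sugeno_nonneg (h : ℝ → ℝ) : 0 ≤ sugeno volume (Icc 0 1) h := by
  have := le_ciSup (sugeno_bddAbove h) (⟨0, le_refl 0⟩ : {a : ℝ // 0 ≤ a})
  simpa [sugeno] using this

theorem diaz_metcalf_sugeno_increasing (f g : ℝ → ℝ) (s : ℝ) (hs : 1 < s)
    (hf_cont : ContinuousOn f (Set.Icc 0 1)) (hg_cont : ContinuousOn g (Set.Icc 0 1))
    (hf_mono : StrictMonoOn f (Set.Icc 0 1)) (hg_mono : StrictMonoOn g (Set.Icc 0 1))
    (hf_nonneg : ∀ x ∈ Set.Icc (0 : ℝ) 1, 0 ≤ f x)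
    (hg_nonneg : ∀ x ∈ Set.Icc (0 : ℝ) 1, 0 ≤ g x) :
    sugeno volume (Set.Icc 0 1) (fun x => f x ^ s) *
      sugeno volume (Set.Icc 0 1) (fun x => g x ^ s) ≤
    sugeno volume (Set.Icc 0 1) (fun x => (f x * g x) ^ s) := by
  have hs0 : (0:ℝ) ≤ s := le_of_lt (lt_trans one_pos hs)
  set S := sugeno volume (Set.Icc 0 1) (fun x => (f x * g x) ^ s) with hS
  -- key pointwise estimate
  have key : ∀ α β : {a : ℝ // 0 ≤ a},
      min α.1 (volume (Icc (0:ℝ) 1 ∩ {x | α.1 ≤ f x ^ s})).toReal *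
      min β.1 (volume (Icc (0:ℝ) 1 ∩ {x | β.1 ≤ g x ^ s})).toReal ≤ S := by
    rintro ⟨α, hα⟩ ⟨β, hβ⟩
    set A1 := Icc (0:ℝ) 1 ∩ {x | α ≤ f x ^ s} with hA1
    set A2 := Icc (0:ℝ) 1 ∩ {x | β ≤ g x ^ s} with hA2
    -- A1 and A2 are nested (up-sets of a linear order within [0,1])
    have hup1 : ∀ x ∈ A1, ∀ y ∈ Icc (0:ℝ) 1, x ≤ y → y ∈ A1 := by
      rintro x ⟨hx, hfx⟩ y hy hxy
      refine ⟨hy, ?_⟩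
      have : f x ≤ f y := hf_mono.monotoneOn hx hy hxy
      exact le_trans hfx (Real.rpow_le_rpow (hf_nonneg x hx) this hs0)
    have hup2 : ∀ x ∈ A2, ∀ y ∈ Icc (0:ℝ) 1, x ≤ y → y ∈ A2 := by
      rintro x ⟨hx, hgx⟩ y hy hxy
      refine ⟨hy, ?_⟩
      have : g x ≤ g y := hg_mono.monotoneOn hx hy hxy
      exact le_trans hgx (Real.rpow_le_rpow (hg_nonneg x hx) this hs0)
    have hnested : A1 ⊆ A2 ∨ A2 ⊆ A1 := by
      by_contra hcon
      push_neg at hcon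
      obtain ⟨h12, h21⟩ := hcon
      rw [Set.not_subset] at h12 h21
      obtain ⟨x, hxA1, hxA2⟩ := h12
      obtain ⟨y, hyA2, hyA1⟩ := h21
      rcases le_total x y with hxy | hyx
      · exact hyA1 (hup1 x hxA1 y hyA2.1 hxy)
      · exact hxA2 (hup2 y hyA2 x hxA1.1 hyx)
    -- intersection contains the set where (f*g)^s ≥ α*β
    have hsub : A1 ∩ A2 ⊆ Icc (0:ℝ) 1 ∩ {x | α * β ≤ (f x * g x) ^ s} := by
      rintro x ⟨⟨hx, hfx⟩, ⟨-, hgx⟩⟩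
      refine ⟨hx, ?_⟩
      have hfx0 := hf_nonneg x hx
      have hgx0 := hg_nonneg x hx
      have : (f x * g x) ^ s = f x ^ s * g x ^ s :=
        Real.mul_rpow hfx0 hgx0
      rw [Set.mem_setOf_eq, this]
      exact mul_le_mul hfx hgx hβ (Real.rpow_nonneg hfx0 s)
    have hmin : min (volume A1).toReal (volume A2).toReal ≤
        (volume (Icc (0:ℝ) 1 ∩ {x | α * β ≤ (f x * g x) ^ s})).toReal := by
      have hfin : volume (Icc (0:ℝ) 1 ∩ {x | α * β ≤ (f x * g x) ^ s}) ≠ ⊤ := by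
        refine ne_top_of_le_ne_top ?_ (measure_mono inter_subset_left)
        simp [Real.volume_Icc]
      rcases hnested with hsub' | hsub'
      · refine le_trans (min_le_left _ _) (ENNReal.toReal_mono hfin ?_)
        refine measure_mono (le_trans ?_ hsub)
        exact subset_inter (le_refl A1) hsub'
      · refine le_trans (min_le_right _ _) (ENNReal.toReal_mono hfin ?_)
        refine measure_mono (le_trans ?_ hsub)
        exact subset_inter hsub' (le_refl A2)
    -- bound the product
    set p := min α (volume A1).toReal with hp
    set q := min β (volume A2).toReal with hq
    have hp0 : 0 ≤ p := le_min hα ENNReal.toReal_nonneg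
    have hq0 : 0 ≤ q := le_min hβ ENNReal.toReal_nonneg
    have hp1 : p ≤ 1 := le_trans (min_le_right _ _) (sugeno_meas_le_one _ _)
    have hq1 : q ≤ 1 := le_trans (min_le_right _ _) (sugeno_meas_le_one _ _)
    have hpq : p * q ≤ min (α * β)
        (volume (Icc (0:ℝ) 1 ∩ {x | α * β ≤ (f x * g x) ^ s})).toReal := by
      refine le_min ?_ ?_
      · exact mul_le_mul (min_le_left _ _) (min_le_left _ _) hq0 hα
      · refine le_trans ?_ hmin
        refine le_min ?_ ?_
        · calc p * q ≤ p * 1 := mul_le_mul_of_nonneg_left hq1 hp0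
            _ = p := mul_one p
            _ ≤ (volume A1).toReal := min_le_right _ _
        · calc p * q ≤ 1 * q := mul_le_mul_of_nonneg_right hp1 hq0
            _ = q := one_mul q
            _ ≤ (volume A2).toReal := min_le_right _ _
    refine le_trans hpq ?_
    have := le_ciSup (sugeno_bddAbove (fun x => (f x * g x) ^ s))
      (⟨α * β, mul_nonneg hα hβ⟩ : {a : ℝ // 0 ≤ a})
    simpa [hS, sugeno] using this
  -- assemble using iSup manipulations
  have hgS : 0 ≤ sugeno volume (Set.Icc 0 1) (fun x => g x ^ s) := sugeno_nonneg _
  rw [sugeno, Real.iSup_mul_of_nonneg hgS]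
  refine ciSup_le fun α => ?_
  have hα0 : 0 ≤ min α.1 (volume (Icc (0:ℝ) 1 ∩ {x | α.1 ≤ f x ^ s})).toReal :=
    le_min α.2 ENNReal.toReal_nonneg
  rw [sugeno, Real.mul_iSup_of_nonneg hα0]
  exact ciSup_le fun β => key α β
end
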